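/- arXiv:1908.05921 — 8 statements merged into one kernel-verified Lean document; each statement's English description precedes it below -/
import Mathlib

section
/- The sum-essential graph of a module is connected with diameter at most 3: for any two nontrivial submodules L ≠ K of M, there is a path of length at most 3 between them in the sum-essential graph. -/
variable {R : Type*} [Ring R] {M : Type*} [AddCommGroup M] [Module R M]

/-- `N` is an essential submodule of `M`: it intersects every nonzero submodule nontrivially. -/
def IsEssentialSubmodule (N : Submodule R M) : Prop :=
  ∀ B : Submodule R M, B ≠ ⊥ → N ⊓ B ≠ ⊥

/-- A vertex of the sum-essential graph `S(M)`: a nontrivial submodule. -/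
def IsVertexS (N : Submodule R M) : Prop := N ≠ ⊥ ∧ N ≠ ⊤

/-- Adjacency in the sum-essential graph `S(M)`. -/
def AdjS (A B : Submodule R M) : Prop :=
  IsVertexS A ∧ IsVertexS B ∧ A ≠ B ∧ IsEssentialSubmodule (A ⊔ B)

/-- A vertex of the proper sum-essential graph `N(M)`: a nontrivial non-essential submodule. -/
def IsVertexP (N : Submodule R M) : Prop :=
  N ≠ ⊥ ∧ N ≠ ⊤ ∧ ¬ IsEssentialSubmodule N

/-- Adjacency in the proper sum-essential graph `N(M)`. -/
def AdjP (A B : Submodule R M) : Prop :=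
  IsVertexP A ∧ IsVertexP B ∧ A ≠ B ∧ IsEssentialSubmodule (A ⊔ B)

/-- `U` is a uniform submodule: nonzero, and any two nonzero submodules of it intersect. -/
def UniformSubmodule (U : Submodule R M) : Prop :=
  U ≠ ⊥ ∧ ∀ A B : Submodule R M, A ≤ U → B ≤ U → A ≠ ⊥ → B ≠ ⊥ → A ⊓ B ≠ ⊥

/-- `C` is a complement of `U` in `M`: maximal with respect to `U ⊓ C = ⊥`. -/
def IsComplementOf (C U : Submodule R M) : Prop :=
  U ⊓ C = ⊥ ∧ ∀ D : Submodule R M, U ⊓ D = ⊥ → C ≤ D → D = C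

/-- Any submodule disjoint from `A` extends to a maximal one (Zorn). -/
lemma aux_exists_compl_ge (A C₀ : Submodule R M) (h : A ⊓ C₀ = ⊥) :
    ∃ C : Submodule R M, C₀ ≤ C ∧ A ⊓ C = ⊥ ∧ ∀ D, A ⊓ D = ⊥ → C ≤ D → D = C := by
  obtain ⟨C, hC0, hCmem, hCmax⟩ := zorn_le_nonempty₀ {C : Submodule R M | A ⊓ C = ⊥}
    (fun c hcs hc y hy => by
      refine ⟨sSup c, ?_, fun z hz => le_sSup hz⟩
      rw [Set.mem_setOf_eq, eq_bot_iff]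
      rintro x ⟨hxA, hxS⟩
      simp only [SetLike.mem_coe] at hxA hxS
      rw [Submodule.mem_sSup_of_directed ⟨y, hy⟩ hc.directedOn] at hxS
      obtain ⟨s, hs, hxs⟩ := hxS
      have := hcs hs
      rw [Set.mem_setOf_eq, eq_bot_iff] at this
      exact this (Submodule.mem_inf.mpr ⟨hxA, hxs⟩)) C₀ h
  exact ⟨C, hC0, hCmem, fun D hD hCD => le_antisymm (hCmax hD hCD) hCD⟩

/-- If `C` is maximal among submodules disjoint from `A`, then `A ⊔ C` is essential. -/
lemma aux_essential_of_max (A C : Submodule R M) (h : A ⊓ C = ⊥)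
    (hmax : ∀ D, A ⊓ D = ⊥ → C ≤ D → D = C) : IsEssentialSubmodule (A ⊔ C) := by
  intro B hB hcontra
  have hACB : A ⊓ (C ⊔ B) = ⊥ := by
    rw [eq_bot_iff]
    rintro x ⟨hxA, hxCB⟩
    obtain ⟨c, hc, b, hb, rfl⟩ := Submodule.mem_sup.mp hxCB
    have hbACB : b ∈ (A ⊔ C) ⊓ B := by
      refine ⟨?_, hb⟩
      rw [show b = (c + b) - c by abel]
      exact sub_mem (le_sup_left (a := A) (b := C) hxA)
        (le_sup_right (a := A) (b := C) hc)
    rw [hcontra] at hbACB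
    simp only [Submodule.mem_bot] at hbACB
    subst hbACB
    rw [add_zero] at hxA ⊢
    rw [← h]
    exact ⟨hxA, hc⟩
  have hBC : B ≤ C := le_trans le_sup_right (le_of_eq (hmax _ hACB le_sup_left))
  apply hB
  rw [eq_bot_iff, ← hcontra]
  exact le_inf (le_trans hBC le_sup_right) le_rfl

/-- The sum-essential graph `S(M)` is connected of diameter at most 3. -/
theorem stmt1 (L K : Submodule R M) (hL : IsVertexS L) (hK : IsVertexS K)
    (hLK : L ≠ K) :
    AdjS L K ∨ (∃ X : Submodule R M, AdjS L X ∧ AdjS X K) ∨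
      ∃ X Y : Submodule R M, AdjS L X ∧ AdjS X Y ∧ AdjS Y K := by
  obtain ⟨hLb, hLt⟩ := hL
  obtain ⟨hKb, hKt⟩ := hK
  by_cases hness : IsEssentialSubmodule (L ⊔ K)
  · exact Or.inl ⟨⟨hLb, hLt⟩, ⟨hKb, hKt⟩, hLK, hness⟩
  have hess := hness
  unfold IsEssentialSubmodule at hess
  push_neg at hess
  obtain ⟨B, hB, hBbot⟩ := hess
  obtain ⟨C, hBC, hC, hCmax⟩ := aux_exists_compl_ge (L ⊔ K) B hBbot
  have hCne : C ≠ ⊥ := fun h => hB (le_bot_iff.mp (h ▸ hBC))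
  have hE : IsEssentialSubmodule ((L ⊔ K) ⊔ C) := aux_essential_of_max _ _ hC hCmax
  have hLC : L ⊓ C = ⊥ := eq_bot_iff.mpr (le_trans (inf_le_inf_right C le_sup_left) hC.le)
  have hKC : K ⊓ C = ⊥ := eq_bot_iff.mpr (le_trans (inf_le_inf_right C le_sup_right) hC.le)
  by_cases hKCt : K ⊔ C = ⊤
  · -- `Z` : a complement of `L` containing `C`; path `L — Z — K`.
    obtain ⟨Z, hCZ, hLZ, hZmax⟩ := aux_exists_compl_ge L C hLC
    have hZess : IsEssentialSubmodule (L ⊔ Z) := aux_essential_of_max L Z hLZ hZmax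
    have hZne : Z ≠ ⊥ := fun h => hCne (le_bot_iff.mp (h ▸ hCZ))
    have hZtop : Z ≠ ⊤ := by
      intro h; apply hLb; rw [h, inf_top_eq] at hLZ; exact hLZ
    have hLneZ : L ≠ Z := by
      intro h; apply hZne; rw [h, inf_idem] at hLZ; exact hLZ
    have hZK : Z ≠ K := fun h => hness (h ▸ hZess)
    have hZKess : IsEssentialSubmodule (Z ⊔ K) := by
      have htop : Z ⊔ K = ⊤ := by
        rw [← top_le_iff, ← hKCt]
        exact sup_le le_sup_right (le_trans hCZ le_sup_left)
      intro B' hB' h'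
      rw [htop, top_inf_eq] at h'
      exact hB' h'
    exact Or.inr (Or.inl ⟨Z, ⟨⟨hLb, hLt⟩, ⟨hZne, hZtop⟩, hLneZ, hZess⟩,
      ⟨⟨hZne, hZtop⟩, ⟨hKb, hKt⟩, hZK, hZKess⟩⟩)
  by_cases hLCt : L ⊔ C = ⊤
  · -- `Z` : a complement of `K` containing `C`; path `L — Z — K`.
    obtain ⟨Z, hCZ, hKZ, hZmax⟩ := aux_exists_compl_ge K C hKC
    have hZess : IsEssentialSubmodule (K ⊔ Z) := aux_essential_of_max K Z hKZ hZmax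
    have hZKess : IsEssentialSubmodule (Z ⊔ K) := by rw [sup_comm]; exact hZess
    have hZne : Z ≠ ⊥ := fun h => hCne (le_bot_iff.mp (h ▸ hCZ))
    have hZtop : Z ≠ ⊤ := by
      intro h; apply hKb; rw [h, inf_top_eq] at hKZ; exact hKZ
    have hZneK : Z ≠ K := by
      intro h; apply hKb; rw [h, inf_idem] at hKZ; exact hKZ
    have hLneZ : L ≠ Z := fun h => hness (by rw [h]; exact hZKess)
    have hLZess : IsEssentialSubmodule (L ⊔ Z) := by
      have htop : L ⊔ Z = ⊤ := by
        rw [← top_le_iff, ← hLCt]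
        exact sup_le le_sup_left (le_trans hCZ le_sup_right)
      intro B' hB' h'
      rw [htop, top_inf_eq] at h'
      exact hB' h'
    exact Or.inr (Or.inl ⟨Z, ⟨⟨hLb, hLt⟩, ⟨hZne, hZtop⟩, hLneZ, hLZess⟩,
      ⟨⟨hZne, hZtop⟩, ⟨hKb, hKt⟩, hZneK, hZKess⟩⟩)
  · -- both `X := K ⊔ C` and `Y := L ⊔ C` are proper; path via them.
    have hXne : K ⊔ C ≠ ⊥ := fun h => hKb (le_bot_iff.mp (h ▸ (le_sup_left : K ≤ K ⊔ C)))
    have hYne : L ⊔ C ≠ ⊥ := fun h => hLb (le_bot_iff.mp (h ▸ (le_sup_left : L ≤ L ⊔ C)))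
    have hCle : C ≤ L ⊔ K → C = ⊥ := fun hle =>
      le_bot_iff.mp (hC ▸ le_inf hle le_rfl)
    have hLneX : L ≠ K ⊔ C := by
      intro h
      exact hCne (hCle (le_trans (le_trans le_sup_right h.ge) le_sup_left))
    have hXneK : K ⊔ C ≠ K := by
      intro h
      exact hCne (hCle (le_trans (le_trans le_sup_right h.le) le_sup_right))
    have hLneY : L ≠ L ⊔ C := by
      intro h
      exact hCne (hCle (le_trans (le_trans le_sup_right h.ge) le_sup_left))
    have hYneK : L ⊔ C ≠ K := by
      intro h
      exact hCne (hCle (le_trans (le_trans le_sup_right h.le) le_sup_right))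
    have hLXess : IsEssentialSubmodule (L ⊔ (K ⊔ C)) := by
      rw [← sup_assoc]; exact hE
    have hYKess : IsEssentialSubmodule ((L ⊔ C) ⊔ K) := by
      rw [sup_right_comm]; exact hE
    by_cases hXY : K ⊔ C = L ⊔ C
    · refine Or.inr (Or.inl ⟨K ⊔ C, ⟨⟨hLb, hLt⟩, ⟨hXne, hKCt⟩, hLneX, hLXess⟩,
        ⟨⟨hXne, hKCt⟩, ⟨hKb, hKt⟩, hXneK, ?_⟩⟩)
      rw [hXY]; exact hYKess
    · refine Or.inr (Or.inr ⟨K ⊔ C, L ⊔ C,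
        ⟨⟨hLb, hLt⟩, ⟨hXne, hKCt⟩, hLneX, hLXess⟩,
        ⟨⟨hXne, hKCt⟩, ⟨hYne, hLCt⟩, hXY, ?_⟩,
        ⟨⟨hYne, hLCt⟩, ⟨hKb, hKt⟩, hYneK, hYKess⟩⟩)
      rw [show (K ⊔ C) ⊔ (L ⊔ C) = (L ⊔ K) ⊔ C by
        rw [sup_sup_sup_comm, sup_idem, sup_comm K L]]
      exact hE
end

section
/- The proper sum-essential graph of a module is connected with diameter at most 3: for any two distinct nontrivial non-essential submodules L, K of M, there is a path of length at most 3 between them in the proper sum-essential graph (all intermediate vertices being non-essential submodules). -/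
variable {R : Type*} [Ring R] {M : Type*} [AddCommGroup M] [Module R M]

lemma essential_mono {A B : Submodule R M} (h : A ≤ B) (hA : IsEssentialSubmodule A) :
    IsEssentialSubmodule B := by
  intro C hC hBC
  exact hA C hC (le_bot_iff.mp (hBC ▸ inf_le_inf_right C h))

lemma exists_complement_ge (A B : Submodule R M) (h : A ⊓ B = ⊥) :
    ∃ C : Submodule R M, B ≤ C ∧ IsComplementOf C A := by
  obtain ⟨C, hBC, hCmax⟩ := zorn_le_nonempty₀
      {C : Submodule R M | A ⊓ C = ⊥}
      (fun c hc hchain D hD => by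
        refine ⟨sSup c, ?_, fun E hE => le_sSup hE⟩
        rw [Set.mem_setOf_eq, eq_bot_iff]
        intro x hx
        obtain ⟨hxA, hxS⟩ := Submodule.mem_inf.mp hx
        obtain ⟨P, hPc, hxP⟩ := (Submodule.mem_sSup_of_directed ⟨D, hD⟩
          hchain.directedOn).mp hxS
        have hm : x ∈ A ⊓ P := Submodule.mem_inf.mpr ⟨hxA, hxP⟩
        rw [hc hPc] at hm
        exact hm)
      B h
  exact ⟨C, hBC, hCmax.prop, fun D hD hCD => (hCmax.le_of_ge hD hCD).antisymm hCD⟩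

lemma complement_sup_essential {A C : Submodule R M} (hC : IsComplementOf C A) :
    IsEssentialSubmodule (A ⊔ C) := by
  intro B hB hcontra
  apply hB
  have hACB : A ⊓ (C ⊔ B) = ⊥ := by
    rw [eq_bot_iff]
    intro x hx
    obtain ⟨hxA, hxCB⟩ := Submodule.mem_inf.mp hx
    obtain ⟨c, hc, b, hb, hcb⟩ := Submodule.mem_sup.mp hxCB
    have hbmem : b ∈ (A ⊔ C) ⊓ B := by
      refine Submodule.mem_inf.mpr ⟨?_, hb⟩
      have hbeq : b = x - c := by rw [← hcb]; abel
      rw [hbeq]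
      exact Submodule.sub_mem _ (Submodule.mem_sup_left hxA) (Submodule.mem_sup_right hc)
    rw [hcontra, Submodule.mem_bot] at hbmem
    have hxc : x = c := by rw [← hcb, hbmem, add_zero]
    have hm : x ∈ A ⊓ C := Submodule.mem_inf.mpr ⟨hxA, hxc ▸ hc⟩
    rw [hC.1] at hm
    exact hm
  have hBC : B ≤ C := by
    have heq := hC.2 (C ⊔ B) hACB le_sup_left
    rw [← heq]
    exact le_sup_right
  rw [eq_bot_iff]
  rw [eq_bot_iff] at hcontra
  intro x hx
  exact hcontra (Submodule.mem_inf.mpr ⟨Submodule.mem_sup_right (hBC hx), hx⟩)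

/-- The proper sum-essential graph `N(M)` is connected of diameter
at most 3 (all intermediate vertices being nontrivial non-essential submodules). -/
theorem stmt2 (L K : Submodule R M) (hL : IsVertexP L) (hK : IsVertexP K)
    (hLK : L ≠ K) :
    AdjP L K ∨ (∃ X : Submodule R M, AdjP L X ∧ AdjP X K) ∨
      ∃ X Y : Submodule R M, AdjP L X ∧ AdjP X Y ∧ AdjP Y K := by

  by_cases hsum : IsEssentialSubmodule (L ⊔ K)
  · exact Or.inl ⟨hL, hK, hLK, hsum⟩
  by_cases hint : L ⊓ K = ⊥
  · -- L ⊓ K = ⊥ : path of length 3 through complements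
    obtain ⟨C, hKC, hC⟩ := exists_complement_ge L K hint
    obtain ⟨D, hLD, hD⟩ := exists_complement_ge K L (by rw [inf_comm]; exact hint)
    have hCne : C ≠ ⊥ := fun h => hK.1 (le_bot_iff.mp (h ▸ hKC))
    have hDne : D ≠ ⊥ := fun h => hL.1 (le_bot_iff.mp (h ▸ hLD))
    have hCtop : C ≠ ⊤ := fun h => hL.1 (by simpa [h] using hC.1)
    have hDtop : D ≠ ⊤ := fun h => hK.1 (by simpa [h] using hD.1)
    have hCness : ¬ IsEssentialSubmodule C := fun h => h L hL.1 (by rw [inf_comm]; exact hC.1)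
    have hDness : ¬ IsEssentialSubmodule D := fun h => h K hK.1 (by rw [inf_comm]; exact hD.1)
    have hLC : L ≠ C := fun h => hL.1 (by rw [← hC.1, ← h, inf_idem])
    have hDK : D ≠ K := fun h => hK.1 (by rw [← hD.1, h, inf_idem])
    have hCD : C ≠ D := fun h => hL.1 (by
      rw [← hC.1]
      exact (inf_eq_left.mpr (h ▸ hLD)).symm)
    have hLCess := complement_sup_essential hC
    have hKDess := complement_sup_essential hD
    refine Or.inr (Or.inr ⟨C, D, ⟨hL, ⟨hCne, hCtop, hCness⟩, hLC, hLCess⟩,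
      ⟨⟨hCne, hCtop, hCness⟩, ⟨hDne, hDtop, hDness⟩, hCD, ?_⟩,
      ⟨⟨hDne, hDtop, hDness⟩, hK, hDK, ?_⟩⟩)
    · exact essential_mono (sup_le (le_trans hLD le_sup_right) le_sup_left) hLCess
    · exact essential_mono (sup_le le_sup_right le_sup_left) hKDess
  · -- L ⊓ K ≠ ⊥ : path of length 2 through a complement of L ⊓ K
    have hNness : ¬ IsEssentialSubmodule (L ⊓ K) := fun h =>
      hL.2.2 (essential_mono inf_le_left h)
    obtain ⟨B, hBne, hBint⟩ : ∃ B : Submodule R M, B ≠ ⊥ ∧ (L ⊓ K) ⊓ B = ⊥ := by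
      by_contra hcon
      push_neg at hcon
      exact hNness (fun B hB => hcon B hB)
    obtain ⟨C, hBC, hC⟩ := exists_complement_ge (L ⊓ K) B hBint
    have hCne : C ≠ ⊥ := fun h => hBne (le_bot_iff.mp (h ▸ hBC))
    have hCtop : C ≠ ⊤ := fun h => hint (by simpa [h] using hC.1)
    have hCness : ¬ IsEssentialSubmodule C := fun h => h (L ⊓ K) hint (by rw [inf_comm]; exact hC.1)
    have hess := complement_sup_essential hC
    have hLC : L ≠ C := fun h => hint (by rw [← hC.1, ← h]; simp)
    have hCK : C ≠ K := fun h => hint (by rw [← hC.1, h]; simp)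
    refine Or.inr (Or.inl ⟨C, ⟨hL, ⟨hCne, hCtop, hCness⟩, hLC, ?_⟩,
      ⟨⟨hCne, hCtop, hCness⟩, hK, hCK, ?_⟩⟩)
    · exact essential_mono (sup_le (le_trans inf_le_left le_sup_left) le_sup_right) hess
    · exact essential_mono (sup_le (le_trans inf_le_right le_sup_right) le_sup_left) hess
end

section
/- If M is a direct sum of n ≥ 2 pairwise non-isomorphic simple R-modules indexed by a set T, then every submodule of M is of the form ⊕_{i∈S} B_i for a subset S ⊆ T, and the degree of the vertex A = ⊕_{i∈S} B_i (for S a nonempty proper subset of T) in the sum-essential graph S(M) equals 2^{|S|} − 1. -/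
variable {R : Type*} [Ring R] {M : Type*} [AddCommGroup M] [Module R M]

set_option linter.unusedSectionVars false

section StmtAux

variable {R : Type*} [Ring R] {M : Type*} [AddCommGroup M] [Module R M]
variable {T : Type*} [Fintype T] {B : T → Submodule R M}

open DirectSum

lemma aux_indep (hindep : ∀ i, Disjoint (B i) (⨆ j ∈ ({i}ᶜ : Set T), B j)) :
    iSupIndep B := by
  rw [iSupIndep_def]
  intro i
  simpa [Set.mem_compl_singleton_iff] using hindep i

lemma aux_mem_iff (hatom : ∀ i, IsAtom (B i))
    (hindep : ∀ i, Disjoint (B i) (⨆ j ∈ ({i}ᶜ : Set T), B j))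
    (S : Set T) (i : T) :
    B i ≤ (⨆ j ∈ S, B j) ↔ i ∈ S := by
  constructor
  · intro h
    by_contra hi
    have hle : (⨆ j ∈ S, B j) ≤ ⨆ j ∈ ({i}ᶜ : Set T), B j := by
      refine biSup_mono ?_
      intro j hj
      simp only [Set.mem_compl_singleton_iff]
      rintro rfl; exact hi hj
    exact (hatom i).1 ((hindep i).eq_bot_of_le (h.trans hle))
  · intro h; exact le_biSup _ h

lemma aux_atom_eq [DecidableEq T] (hatom : ∀ i, IsAtom (B i))
    (hint : DirectSum.IsInternal B)
    (hnoniso : ∀ i j, i ≠ j → IsEmpty (↥(B i) ≃ₗ[R] ↥(B j)))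
    (C : Submodule R M) (hC : IsAtom C) : ∃ i, C = B i := by
  classical
  set e := LinearEquiv.ofBijective (coeLinearMap B) hint with he
  have hsum : ∀ x : M, ∑ i, ((e.symm x) i : M) = x := by
    intro x
    calc ∑ i, ((e.symm x) i : M)
        = ∑ i, coeLinearMap B (DirectSum.of (fun i => ↥(B i)) i ((e.symm x) i)) := by
          simp
      _ = coeLinearMap B (∑ i, DirectSum.of (fun i => ↥(B i)) i ((e.symm x) i)) :=
          (map_sum _ _ _).symm
      _ = coeLinearMap B (e.symm x) := by rw [DirectSum.sum_univ_of]
      _ = x := by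
          have h2 := e.apply_symm_apply x
          exact h2
  haveI : IsSimpleModule R ↥C := isSimpleModule_iff_isAtom.mpr hC
  haveI : ∀ i, IsSimpleModule R ↥(B i) := fun i => isSimpleModule_iff_isAtom.mpr (hatom i)
  set f : ∀ i, ↥C →ₗ[R] ↥(B i) := fun i =>
    (DirectSum.component R T (fun j => ↥(B j)) i).comp
      (e.symm.toLinearMap.comp C.subtype) with hf
  have hfc : ∀ (i) (c : ↥C), f i c = (e.symm (c : M)) i := fun i c => rfl
  obtain ⟨x, hxC, hx0⟩ := Submodule.exists_mem_ne_zero_of_ne_bot hC.1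
  obtain ⟨i, hi⟩ : ∃ i, (e.symm x) i ≠ 0 := by
    by_contra hall
    push_neg at hall
    apply hx0
    rw [← hsum x]
    simp [hall]
  have hfi : f i ≠ 0 := by
    intro h0
    apply hi
    have := hfc i ⟨x, hxC⟩
    rw [h0] at this
    exact (by simpa using this.symm)
  have hzero : ∀ j, j ≠ i → f j = 0 := by
    intro j hj
    by_contra hfj
    have e1 : ↥C ≃ₗ[R] ↥(B i) := LinearEquiv.ofBijective _ (LinearMap.bijective_of_ne_zero hfi)
    have e2 : ↥C ≃ₗ[R] ↥(B j) := LinearEquiv.ofBijective _ (LinearMap.bijective_of_ne_zero hfj)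
    exact (hnoniso j i hj).false (e2.symm.trans e1)
  have hle : C ≤ B i := by
    intro c hc
    have h2 : ∀ j, j ≠ i → ((e.symm c) j : M) = 0 := by
      intro j hj
      have h3 := hfc j ⟨c, hc⟩
      rw [hzero j hj] at h3
      simp only [LinearMap.zero_apply] at h3
      rw [← h3]
      simp
    have h1 : (∑ j, ((e.symm c) j : M)) = ((e.symm c) i : M) :=
      Finset.sum_eq_single i (fun j _ hj => h2 j hj)
        (fun h => absurd (Finset.mem_univ i) h)
    have h4 : c = ((e.symm c) i : M) := by rw [← h1, hsum c]
    rw [h4]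
    exact ((e.symm c) i).2
  rcases ((hatom i).le_iff).mp hle with h | h
  · exact absurd h hC.1
  · exact ⟨i, h⟩

lemma aux_semisimple (hatom : ∀ i, IsAtom (B i)) (hsum : (⨆ i, B i) = ⊤) :
    IsSemisimpleModule R M := by
  apply IsSemisimpleModule.of_sSup_simples_eq_top
  apply le_antisymm le_top
  rw [← hsum]
  exact iSup_le fun i => le_sSup (isSimpleModule_iff_isAtom.mpr (hatom i))

lemma aux_repr (hatom : ∀ i, IsAtom (B i))
    (hindep : ∀ i, Disjoint (B i) (⨆ j ∈ ({i}ᶜ : Set T), B j))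
    (hsum : (⨆ i, B i) = ⊤)
    (hnoniso : ∀ i j, i ≠ j → IsEmpty (↥(B i) ≃ₗ[R] ↥(B j)))
    (N : Submodule R M) : ∃ S : Set T, N = ⨆ i ∈ S, B i := by
  classical
  haveI := aux_semisimple hatom hsum
  have hint : DirectSum.IsInternal B :=
    DirectSum.isInternal_submodule_of_iSupIndep_of_iSup_eq_top (aux_indep hindep) hsum
  refine ⟨{i | B i ≤ N}, le_antisymm ?_ (iSup₂_le fun i hi => hi)⟩
  conv_lhs => rw [← sSup_atoms_le_eq N]
  apply sSup_le
  rintro a ⟨ha, haN⟩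
  obtain ⟨i, rfl⟩ := aux_atom_eq hatom hint hnoniso a ha
  exact le_biSup _ haN

lemma aux_ess_iff (hatom : ∀ i, IsAtom (B i))
    (hindep : ∀ i, Disjoint (B i) (⨆ j ∈ ({i}ᶜ : Set T), B j))
    (hsum : (⨆ i, B i) = ⊤) (S : Set T) :
    IsEssentialSubmodule (⨆ i ∈ S, B i) ↔ S = Set.univ := by
  constructor
  · intro h
    by_contra hS
    obtain ⟨i, hi⟩ := (Set.ne_univ_iff_exists_notMem S).mp hS
    apply h (B i) (hatom i).1
    have hle : (⨆ j ∈ S, B j) ≤ ⨆ j ∈ ({i}ᶜ : Set T), B j := by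
      refine biSup_mono ?_
      intro j hj
      simp only [Set.mem_compl_singleton_iff]
      rintro rfl; exact hi hj
    exact disjoint_iff.mp (((hindep i).mono_right le_rfl).symm.mono_left hle)
  · rintro rfl
    have htop : (⨆ i ∈ (Set.univ : Set T), B i) = ⊤ := by
      rw [← hsum]; simp
    rw [htop]
    intro C hC
    rwa [top_inf_eq]

end StmtAux

/-- If `M` is an internal direct sum of `n ≥ 2` pairwise non-isomorphic
simple submodules `B i`, then every submodule of `M` is `⨆ i ∈ S, B i` for some
`S ⊆ T`, and for `S` nonempty proper the vertex `⨆ i ∈ S, B i` has degree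
`2 ^ |S| − 1` in the sum-essential graph. -/
theorem stmt3 {T : Type*} [Fintype T] (B : T → Submodule R M)
    (hcard : 2 ≤ Fintype.card T)
    (hatom : ∀ i, IsAtom (B i))
    (hindep : ∀ i, Disjoint (B i) (⨆ j ∈ ({i}ᶜ : Set T), B j))
    (hsum : (⨆ i, B i) = ⊤)
    (hnoniso : ∀ i j, i ≠ j → IsEmpty (↥(B i) ≃ₗ[R] ↥(B j))) :
    (∀ N : Submodule R M, ∃ S : Set T, N = ⨆ i ∈ S, B i) ∧
    (∀ S : Set T, S.Nonempty → S ≠ Set.univ →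
      {C : Submodule R M | AdjS (⨆ i ∈ S, B i) C}.ncard = 2 ^ S.ncard - 1) := by
  classical
  set F : Set T → Submodule R M := fun S' => ⨆ i ∈ S', B i with hF
  have hFinj : Function.Injective F := by
    intro S1 S2 h
    ext i
    rw [← aux_mem_iff hatom hindep S1 i, show (⨆ j ∈ S1, B j) = F S1 from rfl, h,
      show F S2 = ⨆ j ∈ S2, B j from rfl, aux_mem_iff hatom hindep S2 i]
  have hFuniv : F Set.univ = ⊤ := by
    rw [hF]; simpa using hsum
  refine ⟨aux_repr hatom hindep hsum hnoniso, ?_⟩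
  intro S hSne hSuniv
  have hScne : Sᶜ.Nonempty := Set.nonempty_compl.mpr hSuniv
  have hset : {C : Submodule R M | AdjS (⨆ i ∈ S, B i) C}
      = F '' {S' : Set T | Sᶜ ⊆ S' ∧ S' ≠ Set.univ} := by
    ext C
    simp only [Set.mem_setOf_eq, Set.mem_image]
    constructor
    · rintro ⟨-, ⟨-, hCtop⟩, hne, hess⟩
      obtain ⟨S', rfl⟩ := aux_repr hatom hindep hsum hnoniso C
      refine ⟨S', ⟨?_, ?_⟩, rfl⟩
      · have hre : (⨆ i ∈ S, B i) ⊔ (⨆ i ∈ S', B i) = ⨆ i ∈ S ∪ S', B i := iSup_union.symm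
        rw [hre] at hess
        have hU : S ∪ S' = Set.univ := (aux_ess_iff hatom hindep hsum _).mp hess
        intro x hx
        rcases Set.eq_univ_iff_forall.mp hU x with h | h
        · exact absurd h hx
        · exact h
      · rintro rfl
        exact hCtop hFuniv
    · rintro ⟨S', ⟨hsub, hS'univ⟩, rfl⟩
      refine ⟨⟨?_, ?_⟩, ⟨?_, ?_⟩, ?_, ?_⟩
      · obtain ⟨i, hi⟩ := hSne
        intro h
        have hle := (aux_mem_iff hatom hindep S i).mpr hi
        rw [h] at hle
        exact (hatom i).1 (le_bot_iff.mp hle)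
      · intro h
        exact hSuniv (hFinj (h.trans hFuniv.symm))
      · obtain ⟨i, hi⟩ := hScne
        intro h
        have hle := (aux_mem_iff hatom hindep S' i).mpr (hsub hi)
        rw [show (⨆ j ∈ S', B j) = F S' from rfl, h] at hle
        exact (hatom i).1 (le_bot_iff.mp hle)
      · intro h
        exact hS'univ (hFinj (h.trans hFuniv.symm))
      · intro h
        have hSS : S = S' := hFinj h
        obtain ⟨x, hx⟩ := hScne
        exact hx (hSS ▸ hsub hx)
      · have hre : (⨆ i ∈ S, B i) ⊔ F S' = ⨆ i ∈ S ∪ S', B i := iSup_union.symm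
        rw [hre]
        apply (aux_ess_iff hatom hindep hsum _).mpr
        apply Set.eq_univ_iff_forall.mpr
        intro x
        rcases em (x ∈ S) with h | h
        · exact Or.inl h
        · exact Or.inr (hsub h)
  rw [hset, Set.ncard_image_of_injective _ hFinj]
  have hcompl_eq : {S' : Set T | Sᶜ ⊆ S' ∧ S' ≠ Set.univ}
      = compl '' ({V : Set T | V ⊆ S} \ {∅}) := by
    ext S'
    simp only [Set.mem_image, Set.mem_diff, Set.mem_setOf_eq, Set.mem_singleton_iff]
    constructor
    · rintro ⟨h1, h2⟩
      refine ⟨S'ᶜ, ⟨Set.compl_subset_comm.mp h1, fun h => h2 (Set.compl_empty_iff.mp h)⟩,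
        compl_compl S'⟩
    · rintro ⟨V, ⟨hVS, hV0⟩, rfl⟩
      exact ⟨Set.compl_subset_compl.mpr hVS, fun h => hV0 (Set.compl_univ_iff.mp h)⟩
  rw [hcompl_eq, Set.ncard_image_of_injective _ compl_injective,
    Set.ncard_diff_singleton_of_mem (show (∅ : Set T) ∈ {V : Set T | V ⊆ S} from Set.empty_subset S)]
  have hpow : {V : Set T | V ⊆ S}.ncard = 2 ^ S.ncard := by
    have e1 : {V : Set T | V ⊆ S} ≃ Set ↥S := Equiv.Set.powerset S
    have e2 : Set ↥S ≃ (↥S → Bool) := Equiv.arrowCongr (Equiv.refl ↥S) Equiv.propEquivBool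
    rw [← Nat.card_coe_set_eq, Nat.card_congr (e1.trans e2), Nat.card_fun]
    rw [Nat.card_coe_set_eq, Nat.card_eq_fintype_card, Fintype.card_bool]
  rw [hpow]
end

section
/- For a left R-module M, the following are equivalent: (1) M has only finitely many submodules; (2) the maximum vertex degree of the sum-essential graph S(M) is finite; (3) every vertex of S(M) has finite degree. -/
variable {R : Type*} [Ring R] {M : Type*} [AddCommGroup M] [Module R M]

/-- Zorn: every submodule has a maximal disjoint partner. -/
lemma aux_exists_maximal_disjoint (A : Submodule R M) :
    ∃ C, Maximal (fun C : Submodule R M => A ⊓ C = ⊥) C := by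
  apply zorn_le₀
  intro c hc hchain
  rcases c.eq_empty_or_nonempty with rfl | hne
  · exact ⟨⊥, show A ⊓ ⊥ = ⊥ by simp, by simp⟩
  · refine ⟨sSup c, ?_, fun z hz => le_sSup hz⟩
    show A ⊓ sSup c = ⊥
    rw [eq_bot_iff]
    rintro x ⟨hxA, hxs⟩
    obtain ⟨N, hNc, hxN⟩ := (Submodule.mem_sSup_of_directed hne hchain.directedOn).1 hxs
    have : x ∈ A ⊓ N := ⟨hxA, hxN⟩
    rw [hc hNc] at this
    exact this

/-- If `C` is maximal disjoint from `A`, then `A ⊔ C` is essential. -/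
lemma aux_sup_essential {A C : Submodule R M}
    (hC : Maximal (fun C : Submodule R M => A ⊓ C = ⊥) C) :
    IsEssentialSubmodule (A ⊔ C) := by
  intro B hB hcontra
  -- show A ⊓ (C ⊔ B) = ⊥
  have hdisj : A ⊓ (C ⊔ B) = ⊥ := by
    rw [eq_bot_iff]
    rintro x ⟨hxA, hxCB⟩
    obtain ⟨cx, hcx, bx, hbx, rfl⟩ := Submodule.mem_sup.1 hxCB
    have hbx' : bx ∈ (A ⊔ C) ⊓ B := by
      refine ⟨?_, hbx⟩
      rw [← add_sub_cancel_left cx bx]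
      exact sub_mem (Submodule.mem_sup_left hxA) (Submodule.mem_sup_right hcx)
    rw [hcontra, Submodule.mem_bot] at hbx'
    have hcxA : cx ∈ A := by rwa [hbx', add_zero] at hxA
    have hcx0 : cx ∈ A ⊓ C := ⟨hcxA, hcx⟩
    rw [hC.1, Submodule.mem_bot] at hcx0
    simp [hbx', hcx0]
  have hle : C ⊔ B ≤ C := hC.2 hdisj le_sup_left
  have hBC : B ≤ C := le_trans le_sup_right hle
  apply hB
  rw [eq_bot_iff, ← hcontra]
  exact le_inf (le_trans hBC le_sup_right) le_rfl

set_option maxHeartbeats 1000000 in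
/-- TFAE: (1) `M` has finitely many submodules; (2) the maximum degree
of `S(M)` is finite; (3) every vertex of `S(M)` has finite degree. -/
theorem stmt4 (h2 : ∃ A B : Submodule R M, IsVertexS A ∧ IsVertexS B ∧ A ≠ B) :
    List.TFAE
      [Finite (Submodule R M),
       ∃ n : ℕ, ∀ A : Submodule R M, IsVertexS A →
         {C | AdjS A C}.Finite ∧ {C | AdjS A C}.ncard ≤ n,
       ∀ A : Submodule R M, IsVertexS A → {C | AdjS A C}.Finite] := by
  tfae_have 1 → 2 := by
    intro h1
    refine ⟨Nat.card (Submodule R M), fun A _ => ⟨Set.toFinite _, ?_⟩⟩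
    calc {C | AdjS A C}.ncard ≤ (Set.univ : Set (Submodule R M)).ncard :=
          Set.ncard_le_ncard (Set.subset_univ _) Set.finite_univ
      _ = Nat.card (Submodule R M) := Set.ncard_univ _
  tfae_have 2 → 3 := by
    rintro ⟨n, hn⟩ A hA
    exact (hn A hA).1
  tfae_have 3 → 1 := by
    intro h3
    rw [← Set.finite_univ_iff]
    by_cases hE : ∃ E : Submodule R M, IsVertexS E ∧ IsEssentialSubmodule E
    · -- an essential vertex is adjacent to every other vertex
      obtain ⟨E, hEv, hEe⟩ := hE
      have hsub : (Set.univ : Set (Submodule R M)) ⊆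
          insert ⊥ (insert ⊤ (insert E {C | AdjS E C})) := by
        intro X _
        by_cases hXb : X = ⊥
        · exact Or.inl hXb
        by_cases hXt : X = ⊤
        · exact Or.inr (Or.inl hXt)
        by_cases hXE : X = E
        · exact Or.inr (Or.inr (Or.inl hXE))
        refine Or.inr (Or.inr (Or.inr ?_))
        refine ⟨hEv, ⟨hXb, hXt⟩, fun h => hXE h.symm, fun B hB => ?_⟩
        intro hcon
        exact hEe B hB (eq_bot_iff.2 (le_trans (inf_le_inf_right B le_sup_left) hcon.le))
      exact Set.Finite.subset (((h3 E hEv).insert E).insert ⊤ |>.insert ⊥) hsub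
    · -- no essential vertex: the only essential submodule is ⊤
      push_neg at hE
      obtain ⟨A₀, B₀, hA₀, _, _⟩ := h2
      have hess_top : ∀ X : Submodule R M, IsEssentialSubmodule X → X = ⊤ := by
        intro X hX
        by_contra hXt
        have hXb : X ≠ ⊥ := by
          intro h
          apply hX A₀ hA₀.1
          rw [h, bot_inf_eq]
        exact hE X ⟨hXb, hXt⟩ hX
      -- every submodule has a complement
      have compl : ∀ Q : Submodule R M, ∃ Q', Q ⊓ Q' = ⊥ ∧ Q ⊔ Q' = ⊤ := by
        intro Q
        obtain ⟨C, hC⟩ := aux_exists_maximal_disjoint Q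
        exact ⟨C, hC.1, hess_top _ (aux_sup_essential hC)⟩
      -- for a vertex A, the set of B with A ⊔ B = ⊤ is finite
      have key : ∀ A : Submodule R M, IsVertexS A → {B : Submodule R M | A ⊔ B = ⊤}.Finite := by
        intro A hA
        have hsub : {B : Submodule R M | A ⊔ B = ⊤} ⊆ insert ⊤ (insert A {C | AdjS A C}) := by
          intro B hB
          rw [Set.mem_setOf_eq] at hB
          by_cases hBt : B = ⊤
          · exact Or.inl hBt
          by_cases hBA : B = A
          · exact Or.inr (Or.inl hBA)
          refine Or.inr (Or.inr ⟨hA, ⟨?_, hBt⟩, fun h => hBA h.symm, ?_⟩)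
          · intro h
            rw [h, sup_bot_eq] at hB
            exact hA.2 hB
          · rw [hB]
            intro D hD hcon
            rw [top_inf_eq] at hcon
            exact hD hcon
        exact Set.Finite.subset (((h3 A hA).insert A).insert ⊤) hsub
      -- now the main pigeonhole argument
      by_contra hinf
      have hinf : (Set.univ : Set (Submodule R M)).Infinite := hinf
      obtain ⟨C, hAC_inf, hAC_sup⟩ := compl A₀
      have hCv : IsVertexS C := by
        constructor
        · intro h; rw [h, sup_bot_eq] at hAC_sup; exact hA₀.2 hAC_sup
        · intro h; rw [h, inf_top_eq] at hAC_inf; exact hA₀.1 hAC_inf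
      have hSA : {B : Submodule R M | A₀ ⊔ B = ⊤}.Finite := key A₀ hA₀
      have hSC : {B : Submodule R M | C ⊔ B = ⊤}.Finite := key C hCv
      -- each D gives A₀ ⊔ D ∈ SC
      have hmem : ∀ D : Submodule R M, A₀ ⊔ D ∈ {B : Submodule R M | C ⊔ B = ⊤} := by
        intro D
        show C ⊔ (A₀ ⊔ D) = ⊤
        have h1 : A₀ ⊔ C ≤ C ⊔ (A₀ ⊔ D) := sup_le (le_sup_left.trans le_sup_right) le_sup_left
        rw [hAC_sup] at h1
        exact top_le_iff.1 h1
      -- some fiber is infinite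
      have hfiber : ∃ Q ∈ {B : Submodule R M | C ⊔ B = ⊤},
          {D : Submodule R M | A₀ ⊔ D = Q}.Infinite := by
        by_contra hfin
        push_neg at hfin
        have : (Set.univ : Set (Submodule R M)) ⊆
            ⋃ Q ∈ {B : Submodule R M | C ⊔ B = ⊤}, {D : Submodule R M | A₀ ⊔ D = Q} := by
          intro D _
          exact Set.mem_biUnion (hmem D) rfl
        exact hinf (Set.Finite.subset (Set.Finite.biUnion hSC hfin) this)
      obtain ⟨Q, _, hQinf⟩ := hfiber
      obtain ⟨Q', hQ'inf, hQ'sup⟩ := compl Q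
      -- map D ↦ D ⊔ Q' into SA, injectively
      have hinj : Set.InjOn (fun D : Submodule R M => D ⊔ Q')
          {D : Submodule R M | A₀ ⊔ D = Q} := by
        intro D₁ hD₁ D₂ hD₂ h
        have hle₁ : D₁ ≤ Q := by rw [← hD₁]; exact le_sup_right
        have hle₂ : D₂ ≤ Q := by rw [← hD₂]; exact le_sup_right
        have e₁ : (D₁ ⊔ Q') ⊓ Q = D₁ := by
          rw [sup_inf_assoc_of_le _ hle₁, inf_comm, hQ'inf, sup_bot_eq]
        have e₂ : (D₂ ⊔ Q') ⊓ Q = D₂ := by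
          rw [sup_inf_assoc_of_le _ hle₂, inf_comm, hQ'inf, sup_bot_eq]
        rw [← e₁, ← e₂]
        simp only at h
        rw [h]
      have himg : (fun D : Submodule R M => D ⊔ Q') '' {D : Submodule R M | A₀ ⊔ D = Q} ⊆
          {B : Submodule R M | A₀ ⊔ B = ⊤} := by
        rintro _ ⟨D, hD, rfl⟩
        show A₀ ⊔ (D ⊔ Q') = ⊤
        rw [← sup_assoc, hD, hQ'sup]
      exact (hQinf.image hinj).mono himg hSA
  tfae_finish
end

section
/- For a left R-module M, every vertex of the proper sum-essential graph N(M) has finite degree if and only if N(M) has only finitely many vertices (i.e., M has only finitely many nontrivial non-essential submodules). -/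
variable {R : Type*} [Ring R] {M : Type*} [AddCommGroup M] [Module R M]

private lemma ess_mono {E F : Submodule R M} (h : IsEssentialSubmodule E) (hEF : E ≤ F) :
    IsEssentialSubmodule F := fun B hB hFB =>
  h B hB (le_bot_iff.mp ((inf_le_inf_right B hEF).trans hFB.le))

private lemma ess_top : IsEssentialSubmodule (⊤ : Submodule R M) := fun B hB h =>
  hB (by rwa [top_inf_eq] at h)

private lemma vertex_of_compl {A C : Submodule R M} (hA0 : A ≠ ⊥) (hC0 : C ≠ ⊥)
    (hd : A ⊓ C = ⊥) : IsVertexP C :=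
  ⟨hC0, fun h => hA0 (by rw [← hd, h, inf_top_eq]),
    fun hess => hess A hA0 (by rw [inf_comm]; exact hd)⟩

/-- Every submodule disjoint from `A` extends to a maximal one, whose sum with `A`
is essential. -/
private lemma exists_maxcompl (A B : Submodule R M) (hAB : A ⊓ B = ⊥) :
    ∃ C : Submodule R M, B ≤ C ∧ A ⊓ C = ⊥ ∧ (∀ D, A ⊓ D = ⊥ → C ≤ D → D = C) ∧
      IsEssentialSubmodule (A ⊔ C) := by
  obtain ⟨C, hBC, hCmem, hCmax⟩ :=
    zorn_le_nonempty₀ {C : Submodule R M | A ⊓ C = ⊥} (fun c hc hchain y hy => by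
      refine ⟨sSup c, ?_, fun z hz => le_sSup hz⟩
      rw [Set.mem_setOf_eq, eq_bot_iff]
      intro x hx
      have hx1 : x ∈ A := hx.1
      have hx2 : x ∈ sSup c := hx.2
      rw [Submodule.mem_sSup_of_directed ⟨y, hy⟩ hchain.directedOn] at hx2
      obtain ⟨s, hs, hxs⟩ := hx2
      have : x ∈ A ⊓ s := ⟨hx1, hxs⟩
      rwa [hc hs] at this) B hAB
  have hmax : ∀ D, A ⊓ D = ⊥ → C ≤ D → D = C := fun D hD hCD =>
    le_antisymm (hCmax hD hCD) hCD
  refine ⟨C, hBC, hCmem, hmax, fun X hX hbot => ?_⟩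
  have hAX : A ⊓ (C ⊔ X) = ⊥ := by
    rw [eq_bot_iff]
    intro a ha
    have haA : a ∈ A := ha.1
    obtain ⟨c, hc, x, hx, hcx⟩ := Submodule.mem_sup.mp ha.2
    have hxmem : a - c ∈ (A ⊔ C) ⊓ X := by
      refine ⟨Submodule.sub_mem _ (Submodule.mem_sup_left haA) (Submodule.mem_sup_right hc), ?_⟩
      have hacx : a - c = x := by rw [← hcx]; abel
      rw [hacx]; exact hx
    rw [hbot] at hxmem
    have hac : a = c := sub_eq_zero.mp ((Submodule.mem_bot R).mp hxmem)
    have : a ∈ A ⊓ C := ⟨haA, hac ▸ hc⟩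
    rwa [hCmem] at this
  have hXC : X ≤ C := le_trans le_sup_right (hmax (C ⊔ X) hAX le_sup_left).le
  have : X = ⊥ := by
    rw [← hbot]
    exact (inf_eq_right.mpr (hXC.trans le_sup_right)).symm
  exact hX this

/-- Every vertex below `P` is a neighbour of a neighbour of `P`. -/
private lemma down_subset {P : Submodule R M} (hP : IsVertexP P) :
    {K : Submodule R M | IsVertexP K ∧ K ≤ P} ⊆
      ⋃ D ∈ {C : Submodule R M | AdjP P C}, {C : Submodule R M | AdjP D C} := by
  obtain ⟨hP0, hPtop, hPness⟩ := hP
  obtain ⟨W, hW0, hPW⟩ : ∃ W : Submodule R M, W ≠ ⊥ ∧ P ⊓ W = ⊥ := by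
    by_contra h; push_neg at h; exact hPness fun B hB => h B hB
  obtain ⟨CP, hWCP, hPCP, _, hessPCP⟩ := exists_maxcompl P W hPW
  have hCP0 : CP ≠ ⊥ := fun h => hW0 (le_bot_iff.mp (h ▸ hWCP))
  rintro K ⟨hKv, hKP⟩
  have hKCP : K ⊓ CP = ⊥ :=
    le_bot_iff.mp ((inf_le_inf_right CP hKP).trans hPCP.le)
  obtain ⟨D, hCPD, hKD, _, hessKD⟩ := exists_maxcompl K CP hKCP
  have hD0 : D ≠ ⊥ := fun h => hCP0 (le_bot_iff.mp (h ▸ hCPD))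
  have hDv : IsVertexP D := vertex_of_compl hKv.1 hD0 hKD
  have hPD : AdjP P D :=
    ⟨⟨hP0, hPtop, hPness⟩, hDv,
      fun h => hKv.1 (by rw [← hKD, ← h]; exact (inf_eq_left.mpr hKP).symm),
      ess_mono hessPCP (sup_le le_sup_left (hCPD.trans le_sup_right))⟩
  have hDK : AdjP D K :=
    ⟨hDv, hKv, fun h => hKv.1 (by rw [← hKD, h, inf_idem]),
      ess_mono hessKD (sup_comm K D).le⟩
  exact Set.mem_biUnion hPD hDK

/-- Every vertex of `N(M)` has finite degree iff `N(M)` has only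
finitely many vertices. -/
theorem stmt6 :
    (∀ A : Submodule R M, IsVertexP A → {C | AdjP A C}.Finite) ↔
      {N : Submodule R M | IsVertexP N}.Finite := by
  constructor
  · intro hdeg
    by_cases hV : ∃ A : Submodule R M, IsVertexP A
    · obtain ⟨A, hAv⟩ := hV
      obtain ⟨hA0, hAtop, hAness⟩ := hAv
      have hAv : IsVertexP A := ⟨hA0, hAtop, hAness⟩
      obtain ⟨B, hB0, hAB⟩ : ∃ B : Submodule R M, B ≠ ⊥ ∧ A ⊓ B = ⊥ := by
        by_contra h; push_neg at h; exact hAness fun B hB => h B hB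
      obtain ⟨CA, hBCA, hACA, _, hessACA⟩ := exists_maxcompl A B hAB
      have hCA0 : CA ≠ ⊥ := fun h => hB0 (le_bot_iff.mp (h ▸ hBCA))
      have hCAv : IsVertexP CA := vertex_of_compl hA0 hCA0 hACA
      have main : {N : Submodule R M | IsVertexP N} ⊆
          insert A ({C | AdjP A C} ∪ ⋃ P ∈ {C : Submodule R M | AdjP CA C},
            ⋃ D ∈ {C : Submodule R M | AdjP P C}, {C : Submodule R M | AdjP D C}) := by
        intro K hK
        by_cases hKA : K = A
        · exact Set.mem_insert_iff.mpr (Or.inl hKA)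
        by_cases hess : IsEssentialSubmodule (A ⊔ K)
        · exact Set.mem_insert_iff.mpr (Or.inr (Or.inl ⟨hAv, hK, Ne.symm hKA, hess⟩))
        · have hP0 : A ⊔ K ≠ ⊥ := fun h => hA0 (by rw [← le_bot_iff, ← h]; exact le_sup_left)
          have hPtop : A ⊔ K ≠ ⊤ := fun h => hess (by rw [h]; exact ess_top)
          have hPv : IsVertexP (A ⊔ K) := ⟨hP0, hPtop, hess⟩
          have hAP : AdjP CA (A ⊔ K) :=
            ⟨hCAv, hPv,
              fun h => hA0 (by rw [← hACA, inf_eq_left.mpr (show A ≤ CA by rw [h]; exact le_sup_left)]),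
              ess_mono hessACA
                (sup_le (le_sup_left.trans le_sup_right) le_sup_left)⟩
          have hKd := down_subset hPv ⟨hK, le_sup_right⟩
          exact Set.mem_insert_iff.mpr (Or.inr (Or.inr (Set.mem_biUnion hAP hKd)))
      refine Set.Finite.subset ?_ main
      refine Set.Finite.insert _ (Set.Finite.union (hdeg A hAv) ?_)
      refine Set.Finite.biUnion (hdeg CA hCAv) fun P hP => ?_
      refine Set.Finite.biUnion (hdeg P hP.2.1) fun D hD => ?_
      exact hdeg D hD.2.1
    · exact Set.Finite.subset Set.finite_empty fun N hN => absurd ⟨N, hN⟩ hV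
  · intro hfin A _
    exact hfin.subset fun C hC => hC.2.1
end

section
/- If a nontrivial submodule B of M has degree 1 in the sum-essential graph S(M), then either B is a simple module, or there exists a simple submodule A properly contained in B such that A and B are the only nontrivial submodules of M. -/
variable {R : Type*} [Ring R] {M : Type*} [AddCommGroup M] [Module R M]

lemma essential_mono' {N N' : Submodule R M} (h : N ≤ N') (hN : IsEssentialSubmodule N) :
    IsEssentialSubmodule N' := by
  intro X hX hc
  exact hN X hX (le_bot_iff.mp (hc ▸ inf_le_inf_right X h))

lemma exists_complement' {B : Submodule R M} (hne : ¬ IsEssentialSubmodule B) :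
    ∃ X : Submodule R M, X ≠ ⊥ ∧ B ⊓ X = ⊥ ∧ IsEssentialSubmodule (B ⊔ X) := by
  unfold IsEssentialSubmodule at hne
  push_neg at hne
  obtain ⟨Y, hYne, hYinf⟩ := hne
  obtain ⟨X, hYX, hXmem, hXmax⟩ := zorn_le_nonempty₀ {D : Submodule R M | B ⊓ D = ⊥}
    (fun c hcs hchain y hy => by
      refine ⟨sSup c, ?_, fun z hz => le_sSup hz⟩
      rw [Set.mem_setOf_eq, eq_bot_iff]
      intro x hx
      rw [Submodule.mem_inf] at hx
      obtain ⟨hxB, hxS⟩ := hx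
      rw [Submodule.mem_sSup_of_directed ⟨y, hy⟩ hchain.directedOn] at hxS
      obtain ⟨p, hp, hxp⟩ := hxS
      have := hcs hp
      rw [Set.mem_setOf_eq] at this
      exact this ▸ ⟨hxB, hxp⟩) Y hYinf
  refine ⟨X, fun h => hYne (le_bot_iff.mp (h ▸ hYX)), hXmem, ?_⟩
  intro Z hZne hc
  have hBXZ : B ⊓ (X ⊔ Z) = ⊥ := by
    rw [eq_bot_iff]
    intro b hb
    rw [Submodule.mem_inf] at hb
    obtain ⟨hbB, hbXZ⟩ := hb
    rw [Submodule.mem_sup] at hbXZ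
    obtain ⟨x, hx, z, hz, hxz⟩ := hbXZ
    have hzmem : z ∈ (B ⊔ X) ⊓ Z := by
      refine ⟨?_, hz⟩
      have : z = b - x := by rw [← hxz]; abel
      exact this ▸ sub_mem (Submodule.mem_sup_left hbB) (Submodule.mem_sup_right hx)
    rw [hc] at hzmem
    have hz0 : z = 0 := hzmem
    have hbx : (b : M) = x := by rw [← hxz, hz0, add_zero]
    have : b ∈ B ⊓ X := ⟨hbB, hbx ▸ hx⟩
    rw [hXmem] at this
    exact this
  have hZX : Z ≤ X := le_trans le_sup_right (hXmax hBXZ le_sup_left)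
  exact hZne (le_bot_iff.mp (hc ▸ (le_inf (le_trans hZX le_sup_right) le_rfl)))

/-- If a nontrivial submodule `B` has degree 1 in `S(M)`, then either
`B` is simple, or there is a simple submodule `A ⊂ B` such that `A` and `B` are
the only nontrivial submodules of `M`. -/
theorem stmt7 (B : Submodule R M) (hB : IsVertexS B) (hdeg : ∃! C, AdjS B C) :
    IsAtom B ∨ ∃ A : Submodule R M, IsAtom A ∧ A < B ∧
      ∀ N : Submodule R M, IsVertexS N → N = A ∨ N = B := by
  obtain ⟨C, hC, huniq⟩ := hdeg
  by_cases hBess : IsEssentialSubmodule B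
  · by_cases hBa : IsAtom B
    · exact Or.inl hBa
    · right
      obtain ⟨hBne, hBnt⟩ := hB
      rw [IsAtom] at hBa
      push_neg at hBa
      obtain ⟨A, hAlt, hAne⟩ := hBa hBne
      have hAvert : IsVertexS A := ⟨hAne, fun h => hBnt (top_le_iff.mp (h ▸ hAlt.le))⟩
      have key : ∀ N : Submodule R M, IsVertexS N → N ≠ B → N = C := fun N hN hNB =>
        huniq N ⟨⟨hBne, hBnt⟩, hN, fun h => hNB h.symm, essential_mono' le_sup_left hBess⟩
      have hAC : A = C := key A hAvert hAlt.ne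
      refine ⟨A, ⟨hAne, fun X hXA => ?_⟩, hAlt, fun N hN => ?_⟩
      · by_contra hXne
        have hXvert : IsVertexS X := ⟨hXne, fun h => hBnt (top_le_iff.mp (h ▸ (hXA.le.trans hAlt.le)))⟩
        have : X = C := key X hXvert (hXA.trans hAlt).ne
        exact hXA.ne (this.trans hAC.symm)
      · by_cases hNB : N = B
        · exact Or.inr hNB
        · exact Or.inl ((key N hN hNB).trans hAC.symm)
  · left
    refine ⟨hB.1, fun A hAlt => ?_⟩
    by_contra hAne
    obtain ⟨X, hXne, hXinf, hXess⟩ := exists_complement' hBess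
    have hXnT : X ≠ ⊤ := fun h => hB.1 (by rw [h, inf_top_eq] at hXinf; exact hXinf)
    have hBX : B ≠ X := fun h => hXne (by rw [← h, inf_idem] at hXinf; exact h ▸ hXinf)
    have hXC : X = C := huniq X ⟨hB, ⟨hXne, hXnT⟩, hBX, hXess⟩
    have hDsup : B ⊔ (A ⊔ X) = B ⊔ X := by
      rw [← sup_assoc, sup_eq_left.mpr hAlt.le]
    have hDne : A ⊔ X ≠ ⊥ := fun h => hAne (le_bot_iff.mp (h ▸ le_sup_left))
    have hDneB : A ⊔ X ≠ B := by
      intro h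
      have hXB : X ≤ B := h ▸ le_sup_right
      exact hXne (le_bot_iff.mp (hXinf ▸ le_inf hXB le_rfl))
    have hDtop : A ⊔ X = ⊤ := by
      by_contra hDnT
      have hAdj : AdjS B (A ⊔ X) :=
        ⟨hB, ⟨hDne, hDnT⟩, fun h => hDneB h.symm, hDsup ▸ hXess⟩
      have hDC : A ⊔ X = C := huniq _ hAdj
      have hAX : A ≤ X := le_sup_left.trans (hDC.trans hXC.symm).le
      exact hAne (le_bot_iff.mp (hXinf ▸ le_inf hAlt.le hAX))
    have := sup_inf_assoc_of_le (y := X) hAlt.le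
    rw [hDtop, top_inf_eq, inf_comm, hXinf, sup_bot_eq] at this
    exact hAlt.ne this.symm
end

section
/- Let M be a semisimple left R-module and B a nontrivial submodule. Then B has degree 1 in the sum-essential graph S(M) if and only if B is simple, M is not simple, and M contains no submodule isomorphic to B other than B itself. -/
variable {R : Type*} [Ring R] {M : Type*} [AddCommGroup M] [Module R M]

section Stmt8Aux

open Submodule LinearMap

variable [IsSemisimpleModule R M]

private lemma ess_iff_top' (N : Submodule R M) : IsEssentialSubmodule N ↔ N = ⊤ := by
  constructor
  · intro h
    obtain ⟨C, hC⟩ := exists_isCompl N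
    rcases eq_or_ne C ⊥ with rfl | hne
    · simpa using hC.sup_eq_top
    · exact absurd (disjoint_iff.mp hC.disjoint) (h C hne)
  · rintro rfl B hB; simpa using hB

private lemma adjS_iff' {A C : Submodule R M} :
    AdjS A C ↔ IsVertexS A ∧ IsVertexS C ∧ A ≠ C ∧ A ⊔ C = ⊤ := by
  unfold AdjS; rw [ess_iff_top']

private lemma adj_of_isCompl' {B C : Submodule R M} (hB : IsVertexS B) (h : IsCompl B C) :
    AdjS B C := by
  have hd : B ⊓ C = ⊥ := disjoint_iff.mp h.disjoint
  refine adjS_iff'.mpr ⟨hB, ⟨?_, ?_⟩, ?_, h.sup_eq_top⟩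
  · rintro rfl; exact hB.2 (by simpa using h.sup_eq_top)
  · rintro rfl; exact hB.1 (by simpa using hd)
  · rintro rfl; exact hB.1 (by simpa using hd)

private lemma two_adj_of_iso' {B B' : Submodule R M} (hBv : IsVertexS B) (hBa : IsAtom B)
    (hne : B' ≠ B) (φ : ↥B ≃ₗ[R] ↥B') :
    ∃ C₁ C₂ : Submodule R M, AdjS B C₁ ∧ AdjS B C₂ ∧ C₁ ≠ C₂ := by
  have hB : B ≠ ⊥ := hBa.1
  have hsB : IsSimpleModule R ↥B := isSimpleModule_iff_isAtom.mpr hBa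
  have hsB' : IsSimpleModule R ↥B' := IsSimpleModule.congr φ.symm
  have hB'a : IsAtom B' := isSimpleModule_iff_isAtom.mp hsB'
  have hB' : B' ≠ ⊥ := hB'a.1
  -- distinct atoms are disjoint
  have hdisj : B ⊓ B' = ⊥ := by
    rcases hBa.le_iff.mp (inf_le_left : B ⊓ B' ≤ B) with h | h
    · exact h
    · exfalso
      have : B ≤ B' := by rw [← h]; exact inf_le_right
      rcases hB'a.le_iff.mp this with h2 | h2
      · exact hB h2
      · exact hne h2.symm
  obtain ⟨E, hE⟩ := exists_isCompl (B ⊔ B')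
  have hEd : (B ⊔ B') ⊓ E = ⊥ := disjoint_iff.mp hE.disjoint
  set f : ↥B →ₗ[R] M := B.subtype + B'.subtype.comp (φ : ↥B →ₗ[R] ↥B') with hf
  have hfx : ∀ x : ↥B, f x = (x : M) + (φ x : M) := fun x => rfl
  set D : Submodule R M := LinearMap.range f with hD
  have hfinj : ∀ x : ↥B, f x = 0 → x = 0 := by
    intro x hx
    have h1 : f x = (x : M) + (φ x : M) := hfx x
    rw [hx] at h1
    have h2 : (x : M) = -(φ x : M) := eq_neg_of_add_eq_zero_left h1.symm
    have : (x : M) ∈ B ⊓ B' := ⟨x.2, by rw [h2]; exact neg_mem (φ x).2⟩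
    rw [hdisj] at this
    exact Subtype.ext this
  -- key disjointness: B ⊓ (B' ⊔ E) = ⊥
  have hkey : B ⊓ (B' ⊔ E) = ⊥ := by
    rw [eq_bot_iff]
    intro b hb
    rw [Submodule.mem_inf] at hb
    obtain ⟨hbB, hb⟩ := hb
    rw [Submodule.mem_sup] at hb
    obtain ⟨b', hb', e, he, hbe⟩ := hb
    have h1 : b - b' ∈ B ⊔ B' :=
      sub_mem (le_sup_left (a := B) (b := B') hbB) (le_sup_right (a := B) (b := B') hb')
    have h2 : b - b' = e := by rw [← hbe]; abel
    have h3 : b - b' ∈ (B ⊔ B') ⊓ E := ⟨h1, h2 ▸ he⟩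
    rw [hEd] at h3
    have h4 : b = b' := sub_eq_zero.mp h3
    have h5 : b ∈ B ⊓ B' := ⟨hbB, h4 ▸ hb'⟩
    rwa [hdisj] at h5
  -- D is disjoint from B' ⊔ E
  have hDd : D ⊓ (B' ⊔ E) = ⊥ := by
    rw [eq_bot_iff]
    intro m hm
    rw [Submodule.mem_inf] at hm
    obtain ⟨hmD, hm⟩ := hm
    obtain ⟨x, hx⟩ := hmD
    have hxm : (x : M) + (φ x : M) = m := by rw [← hfx x, hx]
    have hxB' : (φ x : M) ∈ B' ⊔ E := le_sup_left (a := B') (b := E) (φ x).2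
    have hxmem : (x : M) ∈ B ⊓ (B' ⊔ E) := by
      refine ⟨x.2, ?_⟩
      have : (x : M) = m - (φ x : M) := by rw [← hxm]; abel
      rw [this]; exact sub_mem hm hxB'
    rw [hkey] at hxmem
    have hx0 : x = 0 := Subtype.ext hxmem
    rw [← hx, hx0, map_zero]
    exact zero_mem _
  have hDne : D ≠ ⊥ := by
    obtain ⟨x, hxB, hx0⟩ := B.ne_bot_iff.mp hB
    intro hbot
    have hmem : f ⟨x, hxB⟩ ∈ D := ⟨⟨x, hxB⟩, rfl⟩
    rw [hbot, Submodule.mem_bot] at hmem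
    exact hx0 (congrArg Subtype.val (hfinj ⟨x, hxB⟩ hmem))
  -- B' ≤ B ⊔ D
  have hB'le : B' ≤ B ⊔ D := by
    intro y hy
    have : (φ (φ.symm ⟨y, hy⟩) : M) = y := by rw [φ.apply_symm_apply]
    have h1 : y = f (φ.symm ⟨y, hy⟩) - ((φ.symm ⟨y, hy⟩ : ↥B) : M) := by
      rw [hfx, this]; abel
    rw [h1]
    exact sub_mem (le_sup_right (a := B) (b := D) ⟨_, rfl⟩)
      (le_sup_left (a := B) (b := D) (φ.symm ⟨y, hy⟩).2)
  -- second disjointness: B ⊓ (D ⊔ E) = ⊥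
  have hkey2 : B ⊓ (D ⊔ E) = ⊥ := by
    rw [eq_bot_iff]
    intro b hb
    rw [Submodule.mem_inf] at hb
    obtain ⟨hbB, hb⟩ := hb
    rw [Submodule.mem_sup] at hb
    obtain ⟨d, hd, e, he, hbe⟩ := hb
    obtain ⟨x, hx⟩ := hd
    have hdx : d = (x : M) + (φ x : M) := by rw [← hx, hfx]
    have h1 : b - (x : M) ∈ B ⊓ (B' ⊔ E) := by
      constructor
      · exact sub_mem hbB x.2
      · have : b - (x : M) = (φ x : M) + e := by rw [← hbe, hdx]; abel
        rw [this]
        exact add_mem (le_sup_left (a := B') (b := E) (φ x).2)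
          (le_sup_right (a := B') (b := E) he)
    rw [hkey] at h1
    have hbx : b = (x : M) := sub_eq_zero.mp h1
    have h2 : (φ x : M) = -e := by
      have h3 : (x:M) + (φ x : M) + e = b := by rw [← hbe, hdx]
      rw [hbx] at h3
      have h5 : (x:M) + ((φ x : M) + e) = (x:M) + 0 := by
        rw [add_zero, ← add_assoc]; exact h3
      exact eq_neg_of_add_eq_zero_left (add_left_cancel h5)
    have h4 : (φ x : M) ∈ (B ⊔ B') ⊓ E :=
      ⟨le_sup_right (a := B) (b := B') (φ x).2, by rw [h2]; exact neg_mem he⟩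
    rw [hEd] at h4
    have hx0 : x = 0 := by
      have : φ x = 0 := Subtype.ext h4
      simpa using congrArg φ.symm this
    rw [hbx, hx0]
    exact (Submodule.mem_bot R).mpr rfl
  refine ⟨B' ⊔ E, D ⊔ E, ?_, ?_, ?_⟩
  · refine adjS_iff'.mpr ⟨hBv, ⟨?_, ?_⟩, ?_, ?_⟩
    · intro h
      exact hB' (le_bot_iff.mp (h ▸ (le_sup_left : B' ≤ B' ⊔ E)))
    · intro h
      rw [h, inf_top_eq] at hkey
      exact hB hkey
    · intro h
      rw [← h, inf_idem] at hkey
      exact hB hkey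
    · rw [← sup_assoc]; exact hE.sup_eq_top
  · refine adjS_iff'.mpr ⟨hBv, ⟨?_, ?_⟩, ?_, ?_⟩
    · intro h
      exact hDne (le_bot_iff.mp (h ▸ (le_sup_left : D ≤ D ⊔ E)))
    · intro h
      rw [h, inf_top_eq] at hkey2
      exact hB hkey2
    · intro h
      rw [← h, inf_idem] at hkey2
      exact hB hkey2
    · refine top_unique ?_
      rw [← hE.sup_eq_top]
      refine sup_le (sup_le le_sup_left ?_) ?_
      · exact le_trans hB'le (sup_le le_sup_left (le_trans le_sup_left le_sup_right))
      · exact le_trans le_sup_right le_sup_right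
  · intro h
    have hle : D ≤ B' ⊔ E := h ▸ (le_sup_left : D ≤ D ⊔ E)
    exact hDne (by rw [← hDd]; exact (inf_eq_left.mpr hle).symm)

private lemma compl_eq_of_no_iso' {B C D : Submodule R M} (hBa : IsAtom B)
    (huniq : ∀ B' : Submodule R M, Nonempty (↥B' ≃ₗ[R] ↥B) → B' = B)
    (hC : IsCompl B C) (hD : IsCompl B D) : D = C := by
  by_cases hle : D ≤ C
  · have h1 : (D ⊔ B) ⊓ C = D ⊔ B ⊓ C := sup_inf_assoc_of_le B hle
    rw [sup_comm, hD.sup_eq_top, top_inf_eq, disjoint_iff.mp hC.disjoint, sup_bot_eq] at h1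
    exact h1.symm
  · exfalso
    set p := B.projectionOnto C hC with hp
    set π : M →ₗ[R] M := B.subtype ∘ₗ p with hπ
    have hπmem : ∀ m : M, π m ∈ B := fun m => (p m).2
    have hπker : ∀ m : M, π m = 0 ↔ m ∈ C := by
      intro m
      rw [hπ]
      simp [hp, Submodule.projectionOnto_apply_eq_zero_iff hC,
        ZeroMemClass.coe_eq_zero]
    have hDmap : Submodule.map π D ≤ B := by
      rintro x ⟨d, _, rfl⟩; exact hπmem d
    have hmapne : Submodule.map π D ≠ ⊥ := by
      intro h
      apply hle
      intro d hd
      have h2 : π d ∈ Submodule.map π D := Submodule.mem_map_of_mem hd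
      rw [h, Submodule.mem_bot] at h2
      exact (hπker d).mp h2
    have hDmapB : Submodule.map π D = B := by
      rcases hBa.le_iff.mp hDmap with h | h
      · exact absurd h hmapne
      · exact h
    obtain ⟨G, hG⟩ := exists_isCompl (D ⊓ C)
    set E := D ⊓ G with hEdef
    have hEC : E ⊓ C = ⊥ := by
      rw [hEdef, inf_right_comm, disjoint_iff.mp hG.disjoint]
    have hDKE : (D ⊓ C) ⊔ E = D := by
      have h2 : ((D ⊓ C) ⊔ G) ⊓ D = (D ⊓ C) ⊔ G ⊓ D :=
        sup_inf_assoc_of_le G (inf_le_left : D ⊓ C ≤ D)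
      rw [hG.sup_eq_top, top_inf_eq] at h2
      rw [hEdef, inf_comm D G, ← h2]
    have hsurj : ∀ b ∈ B, ∃ e ∈ E, π e = b := by
      intro b hb
      rw [← hDmapB, Submodule.mem_map] at hb
      obtain ⟨d, hd, hπd⟩ := hb
      rw [← hDKE, Submodule.mem_sup] at hd
      obtain ⟨k, hk, e, he, hke⟩ := hd
      refine ⟨e, he, ?_⟩
      have h3 : π k = 0 := (hπker k).mpr hk.2
      rw [← hπd, ← hke, map_add, h3, zero_add]
    set g : ↥E →ₗ[R] ↥B := p ∘ₗ E.subtype with hg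
    have hginj : Function.Injective g := by
      rw [← LinearMap.ker_eq_bot, LinearMap.ker_eq_bot']
      intro x hx
      have h4 : (x : M) ∈ C := by
        apply (hπker (x : M)).mp
        rw [hπ]
        simpa [hg] using congrArg (B.subtype) hx
      have h5 : (x : M) ∈ E ⊓ C := ⟨x.2, h4⟩
      rw [hEC, Submodule.mem_bot] at h5
      exact Subtype.ext h5
    have hgsurj : Function.Surjective g := by
      intro t
      obtain ⟨e, he, hπe⟩ := hsurj t.1 t.2
      exact ⟨⟨e, he⟩, Subtype.ext hπe⟩
    have hE_eq : E = B := huniq E ⟨LinearEquiv.ofBijective g ⟨hginj, hgsurj⟩⟩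
    have hED : E ≤ D := inf_le_left
    rw [hE_eq] at hED
    have hbot : B ⊓ D = ⊥ := disjoint_iff.mp hD.disjoint
    exact hBa.1 (by rw [← hbot]; exact (inf_eq_left.mpr hED).symm)

end Stmt8Aux

/-- In a semisimple module `M`, a nontrivial submodule `B` has degree 1
in `S(M)` iff `B` is simple, `M` is not simple, and no other submodule of `M` is
isomorphic to `B`. -/
theorem stmt8 [IsSemisimpleModule R M] (B : Submodule R M) (hB : IsVertexS B) :
    (∃! C, AdjS B C) ↔
      (IsAtom B ∧ ¬ IsSimpleModule R M ∧
        ∀ B' : Submodule R M, Nonempty (↥B' ≃ₗ[R] ↥B) → B' = B) := by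
  constructor
  · rintro ⟨C₀, hC₀, huniq⟩
    have hatom : IsAtom B := by
      by_contra hna
      obtain ⟨A, hAB, hA⟩ : ∃ A : Submodule R M, A < B ∧ A ≠ ⊥ := by
        rw [IsAtom] at hna
        push_neg at hna
        obtain ⟨A, h1, h2⟩ := hna hB.1
        exact ⟨A, h1, h2⟩
      obtain ⟨E, hE⟩ := exists_isCompl B
      have hadjE : AdjS B E := adj_of_isCompl' hB hE
      have hEd : B ⊓ E = ⊥ := disjoint_iff.mp hE.disjoint
      have hinf : B ⊓ (A ⊔ E) = A := by
        have h := sup_inf_assoc_of_le E (le_of_lt hAB)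
        rw [inf_comm E B, hEd, sup_bot_eq] at h
        rw [inf_comm]; exact h
      have hadjAE : AdjS B (A ⊔ E) := by
        refine adjS_iff'.mpr ⟨hB, ⟨?_, ?_⟩, ?_, ?_⟩
        · intro h
          exact hA (le_bot_iff.mp (h ▸ (le_sup_left : A ≤ A ⊔ E)))
        · intro h
          rw [h, inf_top_eq] at hinf
          exact lt_irrefl _ (hinf ▸ hAB)
        · intro h
          rw [← h, inf_idem] at hinf
          exact lt_irrefl _ (hinf ▸ hAB)
        · rw [← sup_assoc, sup_eq_left.mpr (le_of_lt hAB)]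
          exact hE.sup_eq_top
      have h1 := huniq E hadjE
      have h2 := huniq (A ⊔ E) hadjAE
      have h3 : A ⊔ E = E := h2.trans h1.symm
      have hAE : A ≤ E := sup_eq_right.mp h3
      exact hA (le_bot_iff.mp (by rw [← hEd]; exact le_inf (le_of_lt hAB) hAE))
    refine ⟨hatom, ?_, ?_⟩
    · intro hs
      haveI := hs
      rcases eq_bot_or_eq_top B with h | h
      · exact hB.1 h
      · exact hB.2 h
    · intro B' hφ
      obtain ⟨φ⟩ := hφ
      by_contra hne
      obtain ⟨C₁, C₂, h1, h2, h12⟩ := two_adj_of_iso' hB hatom hne φ.symm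
      exact h12 ((huniq C₁ h1).trans (huniq C₂ h2).symm)
  · rintro ⟨hatom, hns, hcopy⟩
    obtain ⟨C, hC⟩ := exists_isCompl B
    refine ⟨C, adj_of_isCompl' hB hC, ?_⟩
    intro D hD
    obtain ⟨_, hDv, hBD, hsup⟩ := adjS_iff'.mp hD
    have hdisj : B ⊓ D = ⊥ := by
      rcases hatom.le_iff.mp (inf_le_left : B ⊓ D ≤ B) with h | h
      · exact h
      · exfalso
        have hle : B ≤ D := inf_eq_left.mp h
        apply hDv.2
        rw [← hsup, sup_eq_right.mpr hle]
    exact compl_eq_of_no_iso' hatom hcopy hC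
      ⟨disjoint_iff.mpr hdisj, codisjoint_iff.mpr hsup⟩
end

section
/- If A is a universal vertex of the sum-essential graph S(M) (adjacent to every other vertex) and A is not essential in M, then A is a simple module. -/
variable {R : Type*} [Ring R] {M : Type*} [AddCommGroup M] [Module R M]

/-- A universal vertex of `S(M)` which is not essential in `M`
is a simple module. -/
theorem stmt16 (A : Submodule R M) (hA : IsVertexS A)
    (huniv : ∀ B : Submodule R M, IsVertexS B → B ≠ A → AdjS A B)
    (hne : ¬ IsEssentialSubmodule A) :
    IsAtom A := by
  refine ⟨hA.1, fun B hB => ?_⟩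
  by_contra hBbot
  have hBtop : B ≠ ⊤ := fun h => hA.2 (top_le_iff.mp (h ▸ hB.le))
  have hBA : B ≠ A := ne_of_lt hB
  obtain ⟨_, _, _, hess⟩ := huniv B ⟨hBbot, hBtop⟩ hBA
  rw [sup_comm, sup_eq_right.mpr hB.le] at hess
  exact hne hess
end
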